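/- Let F be an entire function on ℂⁿ that vanishes on the set H^n = ⋃_{m=1}^n H^n_m, where H^n_m = {z ∈ ℂⁿ : z_m ∈ ℤ}. Then there exists an entire function G on ℂⁿ such that F(z) = G(z)·∏_{k=1}^n sin(π z_k) for all z ∈ ℂⁿ. -/

import Mathlib

open Finset

open Metric Complex Topology Filter intervalIntegral

set_option maxHeartbeats 1000000

lemma fderiv_bound {n : ℕ} {F : (Fin n → ℂ) → ℂ} (hF : Differentiable ℂ F) (r : ℝ) :
    ∃ C : ℝ, 0 ≤ C ∧ ∀ z ∈ closedBall (0 : Fin n → ℂ) r, ‖fderiv ℂ F z‖ ≤ C := by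
  obtain ⟨M, hM⟩ := (isCompact_closedBall (0 : Fin n → ℂ) (r + 1)).exists_bound_of_continuousOn
    hF.continuous.continuousOn
  set M' := max M 0 with hM'
  have hM'0 : 0 ≤ M' := le_max_right _ _
  refine ⟨(n : ℝ) * M', by positivity, fun z hz => ?_⟩
  have hznorm : ‖z‖ ≤ r := by simpa [mem_closedBall, dist_zero_right] using hz
  have key : ∀ j : Fin n, ‖fderiv ℂ F z (Pi.single j 1)‖ ≤ M' := by
    intro j
    set g : ℂ → ℂ := fun w => F (Function.update z j w) with hg
    have hgdiff : Differentiable ℂ g :=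
      hF.comp (fun w => (hasFDerivAt_update z w).differentiableAt)
    have hd : HasDerivAt g (fderiv ℂ F z (Pi.single j 1)) (z j) := by
      have h1 := hasDerivAt_update z j (z j)
      have h2 : HasFDerivAt F (fderiv ℂ F z) (Function.update z j (z j)) := by
        rw [Function.update_eq_self]; exact (hF z).hasFDerivAt
      exact h2.comp_hasDerivAt (z j) h1
    rw [← hd.deriv]
    have hbound : ∀ w ∈ Metric.sphere (z j) 1, ‖g w‖ ≤ M' := by
      intro w hw
      have hmem : Function.update z j w ∈ closedBall (0 : Fin n → ℂ) (r + 1) := by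
        rw [mem_closedBall, dist_zero_right]
        rw [pi_norm_le_iff_of_nonneg (by linarith [hznorm, (norm_nonneg z)])]
        intro i
        rcases eq_or_ne i j with h | h
        · subst h
          simp only [Function.update_self]
          have : dist w (z i) = 1 := hw
          calc ‖w‖ = ‖(w - z i) + z i‖ := by ring_nf
            _ ≤ ‖w - z i‖ + ‖z i‖ := norm_add_le _ _
            _ ≤ 1 + r := by
                rw [← dist_eq_norm] at *
                exact add_le_add (le_of_eq this) ((norm_le_pi_norm z i).trans hznorm)
            _ = r + 1 := by ring
        · simp only [Function.update_of_ne h]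
          have := (norm_le_pi_norm z i).trans hznorm
          linarith
      exact (hM _ hmem).trans (le_max_left _ _)
    have := Complex.norm_deriv_le_of_forall_mem_sphere_norm_le one_pos
      hgdiff.diffContOnCl hbound
    simpa using this
  refine ContinuousLinearMap.opNorm_le_bound _ (by positivity) fun v => ?_
  have hv : v = ∑ j, v j • (Pi.single j (1 : ℂ) : Fin n → ℂ) := by
    funext i
    rw [Finset.sum_apply]
    simp only [Pi.smul_apply, Pi.single_apply, smul_eq_mul, mul_ite, mul_one, mul_zero]
    rw [Finset.sum_ite_eq Finset.univ i v]
    simp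
  calc ‖fderiv ℂ F z v‖ = ‖∑ j, v j • fderiv ℂ F z (Pi.single j 1)‖ := by
        conv_lhs => rw [hv]
        rw [map_sum]
        simp only [map_smul]
    _ ≤ ∑ j, ‖v j • fderiv ℂ F z (Pi.single j 1)‖ := norm_sum_le _ _
    _ ≤ ∑ _j : Fin n, ‖v‖ * M' := by
        refine Finset.sum_le_sum fun j _ => ?_
        rw [norm_smul]
        exact mul_le_mul (norm_le_pi_norm v j) (key j) (norm_nonneg _) (norm_nonneg _)
    _ = (n : ℝ) * M' * ‖v‖ := by
        rw [Finset.sum_const, Finset.card_univ, Fintype.card_fin, nsmul_eq_mul]; ring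

noncomputable def updBase {n : ℕ} (m : Fin n) : (Fin n → ℂ) →L[ℂ] (Fin n → ℂ) :=
  ContinuousLinearMap.id ℂ (Fin n → ℂ) -
    (ContinuousLinearMap.pi (Pi.single m (ContinuousLinearMap.id ℂ ℂ))).comp
      (ContinuousLinearMap.proj m)

lemma updBase_apply {n : ℕ} (m : Fin n) (y : Fin n → ℂ) (j : Fin n) :
    updBase m y j = if j = m then 0 else y j := by
  simp only [updBase, ContinuousLinearMap.sub_apply, ContinuousLinearMap.id_apply,
    ContinuousLinearMap.comp_apply, ContinuousLinearMap.proj_apply,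
    ContinuousLinearMap.pi_apply, Pi.sub_apply]
  rcases eq_or_ne j m with h | h
  · subst h; simp [Pi.single_apply]
  · simp [Pi.single_apply, h]

lemma hasFDerivAt_updBase {n : ℕ} (m : Fin n) (ζ : ℂ) (z : Fin n → ℂ) :
    HasFDerivAt (fun y : Fin n → ℂ => Function.update y m ζ) (updBase m) z := by
  have hfun : (fun y : Fin n → ℂ => Function.update y m ζ)
      = fun y : Fin n → ℂ => updBase m y + Pi.single m ζ := by
    funext y j
    rw [Pi.add_apply, updBase_apply, Function.update_apply, Pi.single_apply]
    rcases eq_or_ne j m with h | h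
    · simp [h]
    · simp [h]
  rw [hfun]
  exact (updBase m).hasFDerivAt.add_const _

lemma norm_updBase_le {n : ℕ} (m : Fin n) : ‖updBase m‖ ≤ 1 := by
  refine ContinuousLinearMap.opNorm_le_bound _ zero_le_one fun y => ?_
  rw [one_mul, pi_norm_le_iff_of_nonneg (norm_nonneg y)]
  intro j
  rw [updBase_apply]
  rcases eq_or_ne j m with h | h
  · simp [h]
  · simp only [if_neg h]; exact norm_le_pi_norm y j

lemma norm_projCLM_le {n : ℕ} (m : Fin n) :
    ‖(ContinuousLinearMap.proj m : (Fin n → ℂ) →L[ℂ] ℂ)‖ ≤ 1 := by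
  refine ContinuousLinearMap.opNorm_le_bound _ zero_le_one fun y => ?_
  rw [one_mul]
  exact norm_le_pi_norm y m

lemma norm_comb_le {E' : Type*} [NormedAddCommGroup E'] [NormedSpace ℂ E']
    {Cf M : ℝ} (k b f c2 : ℂ) (P Q : E') (hk : ‖k‖ = 1) (hb : ‖b‖ ≤ 2)
    (hP : ‖P‖ ≤ Cf) (hf : ‖f‖ ≤ M) (hc2 : ‖c2‖ ≤ 4) (hQ : ‖Q‖ ≤ 1)
    (hCf : 0 ≤ Cf) (hM : 0 ≤ M) :
    ‖k • (b • P + f • c2 • Q)‖ ≤ 2 * Cf + 4 * M := by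
  have e1 : ‖b • P‖ ≤ 2 * Cf := by
    rw [norm_smul]
    exact mul_le_mul hb hP (norm_nonneg _) (by norm_num)
  have e2 : ‖f • c2 • Q‖ ≤ M * (4 * 1) := by
    rw [norm_smul, norm_smul]
    refine mul_le_mul hf ?_ (by positivity) hM
    exact mul_le_mul hc2 hQ (norm_nonneg _) (by norm_num)
  calc ‖k • (b • P + f • c2 • Q)‖ = ‖k‖ * ‖b • P + f • c2 • Q‖ := norm_smul _ _
    _ = ‖b • P + f • c2 • Q‖ := by rw [hk, one_mul]
    _ ≤ ‖b • P‖ + ‖f • c2 • Q‖ := norm_add_le _ _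
    _ ≤ 2 * Cf + 4 * M := by linarith


lemma div_linear {n : ℕ} {F : (Fin n → ℂ) → ℂ} (hF : Differentiable ℂ F) (m : Fin n) (c : ℂ)
    (hv : ∀ z, z m = c → F z = 0) :
    ∃ H : (Fin n → ℂ) → ℂ, Differentiable ℂ H ∧ ∀ z, F z = (z m - c) * H z := by
  classical
  set H : (Fin n → ℂ) → ℂ :=
    fun z => dslope (fun w => F (Function.update z m w)) c (z m) with hHdef
  have hupd : ∀ z : Fin n → ℂ, Differentiable ℂ (fun w => F (Function.update z m w)) :=
    fun z => hF.comp fun w => (hasFDerivAt_update z w).differentiableAt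
  have hgz0 : ∀ z : Fin n → ℂ, F (Function.update z m c) = 0 :=
    fun z => hv _ (Function.update_self m c z)
  have hid : ∀ z, F z = (z m - c) * H z := by
    intro z
    have h := sub_smul_dslope (fun w => F (Function.update z m w)) c (z m)
    rw [Function.update_eq_self, hgz0, sub_zero, smul_eq_mul] at h
    exact h.symm
  have hevm : Differentiable ℂ (fun z : Fin n → ℂ => z m) :=
    fun z => (ContinuousLinearMap.proj m : (Fin n → ℂ) →L[ℂ] ℂ).differentiableAt
  refine ⟨H, fun a => ?_, hid⟩
  rcases ne_or_eq (a m) c with ham | ham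
  · -- away from the hyperplane
    have hdiff : DifferentiableAt ℂ (fun z : Fin n → ℂ => (z m - c)⁻¹ * F z) a :=
      (((hevm a).sub_const c).inv (sub_ne_zero.2 ham)).mul (hF a)
    refine hdiff.congr_of_eventuallyEq ?_
    have hopen : IsOpen {z : Fin n → ℂ | z m ≠ c} := isOpen_ne.preimage (continuous_apply m)
    refine Filter.eventuallyEq_of_mem (hopen.mem_nhds ham) fun z hz => ?_
    have hz' : z m ≠ c := hz
    rw [hHdef]
    simp only
    rw [dslope_of_ne _ hz', slope_def_field, Function.update_eq_self, hgz0, sub_zero,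
      div_eq_inv_mul]
  · -- on the hyperplane
    set ζ : ℝ → ℂ := circleMap c 1 with hζ
    set K : ℝ → ℂ := fun θ => deriv (circleMap c 1) θ * (ζ θ - c)⁻¹ with hK
    set Ψ : (Fin n → ℂ) → ℝ → ℂ :=
      fun z θ => K θ * ((ζ θ - z m)⁻¹ * F (Function.update z m (ζ θ))) with hΨ
    set Φ : (Fin n → ℂ) → ℂ :=
      fun z => (2 * (Real.pi : ℂ) * Complex.I)⁻¹ • ∫ θ in (0:ℝ)..(2 * Real.pi), Ψ z θ with hΦ
    have claim1 : ∀ z : Fin n → ℂ, dist (z m) c < 1 → H z = Φ z := by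
      intro z hz1
      have hds : Differentiable ℂ (dslope (fun w => F (Function.update z m w)) c) :=
        differentiableOn_univ.mp
          ((Complex.differentiableOn_dslope Filter.univ_mem).mpr (hupd z).differentiableOn)
      have hw : z m ∈ ball c 1 := by rwa [mem_ball]
      have cauchy :=
        Complex.two_pi_I_inv_smul_circleIntegral_sub_inv_smul_of_differentiable_on_off_countable
          (s := ∅) Set.countable_empty hw hds.continuous.continuousOn
          (fun x _ => hds.differentiableAt)
      rw [hHdef]
      simp only
      rw [← cauchy, hΦ]
      simp only
      congr 1
      rw [circleIntegral]
      refine intervalIntegral.integral_congr fun θ _ => ?_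
      have hne : circleMap c 1 θ ≠ c := circleMap_ne_center one_ne_zero
      rw [dslope_of_ne _ hne, slope_def_field, hgz0, sub_zero]
      simp only [hΨ, hK, hζ, smul_eq_mul, div_eq_mul_inv]
      ring
    have claim2 : DifferentiableAt ℂ Φ a := by
      obtain ⟨Cf, hCf0, hCf⟩ := fderiv_bound hF (‖a‖ + ‖c‖ + 2)
      obtain ⟨M, hM⟩ := (isCompact_closedBall (0 : Fin n → ℂ)
        (‖a‖ + ‖c‖ + 2)).exists_bound_of_continuousOn hF.continuous.continuousOn
      set M' := max M 0 with hM'def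
      have hM'0 : 0 ≤ M' := le_max_right _ _
      have hM' : ∀ x ∈ closedBall (0 : Fin n → ℂ) (‖a‖ + ‖c‖ + 2), ‖F x‖ ≤ M' :=
        fun x hx => (hM x hx).trans (le_max_left _ _)
      have hζc : ∀ θ : ℝ, ‖ζ θ - c‖ = 1 := by
        intro θ
        rw [hζ, circleMap_sub_center]
        simpa using abs_circleMap_zero 1 θ
      have hζnorm : ∀ θ : ℝ, ‖ζ θ‖ ≤ ‖c‖ + 1 := by
        intro θ
        calc ‖ζ θ‖ = ‖c + (ζ θ - c)‖ := by ring_nf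
          _ ≤ ‖c‖ + ‖ζ θ - c‖ := norm_add_le _ _
          _ = ‖c‖ + 1 := by rw [hζc]
      have hmem : ∀ (θ : ℝ), ∀ x ∈ ball a (1/2 : ℝ),
          Function.update x m (ζ θ) ∈ closedBall (0 : Fin n → ℂ) (‖a‖ + ‖c‖ + 2) := by
        intro θ x hx
        rw [mem_closedBall, dist_zero_right]
        have h0 : (0:ℝ) ≤ ‖a‖ + ‖c‖ + 2 := by positivity
        rw [pi_norm_le_iff_of_nonneg h0]
        intro j
        rcases eq_or_ne j m with h | h
        · subst h
          rw [Function.update_self]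
          have := hζnorm θ
          have : ‖ζ θ‖ ≤ ‖c‖ + 1 := this
          have ha0 : (0:ℝ) ≤ ‖a‖ := norm_nonneg a
          linarith
        · rw [Function.update_of_ne h]
          have h1 : ‖x j - a j‖ ≤ ‖x - a‖ := by
            have := norm_le_pi_norm (x - a) j
            simpa using this
          have h2 : ‖x - a‖ < 1/2 := by rwa [mem_ball, dist_eq_norm] at hx
          have h3 : ‖a j‖ ≤ ‖a‖ := norm_le_pi_norm a j
          have hc0 : (0:ℝ) ≤ ‖c‖ := norm_nonneg c
          calc ‖x j‖ = ‖(x j - a j) + a j‖ := by ring_nf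
            _ ≤ ‖x j - a j‖ + ‖a j‖ := norm_add_le _ _
            _ ≤ ‖a‖ + ‖c‖ + 2 := by linarith
      have hζx : ∀ (θ : ℝ), ∀ x ∈ ball a (1/2 : ℝ), (1:ℝ)/2 ≤ ‖ζ θ - x m‖ := by
        intro θ x hx
        have h2 : ‖x - a‖ < 1/2 := by rwa [mem_ball, dist_eq_norm] at hx
        have h1 : ‖x m - c‖ < 1/2 := by
          rw [← ham]
          calc ‖x m - a m‖ ≤ ‖x - a‖ := by simpa using norm_le_pi_norm (x - a) m
            _ < 1/2 := h2
        have h3 : ‖ζ θ - c‖ ≤ ‖ζ θ - x m‖ + ‖x m - c‖ := by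
          calc ‖ζ θ - c‖ = ‖(ζ θ - x m) + (x m - c)‖ := by ring_nf
            _ ≤ _ := norm_add_le _ _
        rw [hζc] at h3
        linarith
      have hζxne : ∀ (θ : ℝ), ∀ x ∈ ball a (1/2 : ℝ), ζ θ - x m ≠ 0 := by
        intro θ x hx h0
        have := hζx θ x hx
        rw [h0, norm_zero] at this
        linarith
      have hKnorm : ∀ θ : ℝ, ‖K θ‖ = 1 := by
        intro θ
        rw [hK]
        simp only [deriv_circleMap]
        rw [norm_mul, norm_mul, norm_inv, hζc]
        have : ‖circleMap 0 1 θ‖ = 1 := by simpa using abs_circleMap_zero 1 θ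
        rw [this]
        simp
      set F' : (Fin n → ℂ) → ℝ → ((Fin n → ℂ) →L[ℂ] ℂ) := fun x θ =>
        K θ • ((ζ θ - x m)⁻¹ • ((fderiv ℂ F (Function.update x m (ζ θ))).comp (updBase m))
          + F (Function.update x m (ζ θ)) •
            ((-((ζ θ - x m) ^ 2)⁻¹) •
              (-(ContinuousLinearMap.proj m : (Fin n → ℂ) →L[ℂ] ℂ)))) with hF'def
      have hΨdiff : ∀ (θ : ℝ), ∀ x ∈ ball a (1/2 : ℝ),
          HasFDerivAt (fun y => Ψ y θ) (F' x θ) x := by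
        intro θ x hx
        have hne2 : ζ θ - x m ≠ 0 := hζxne θ x hx
        have h0 : HasFDerivAt (fun y : Fin n → ℂ => ζ θ - y m)
            (-(ContinuousLinearMap.proj m : (Fin n → ℂ) →L[ℂ] ℂ)) x :=
          ((ContinuousLinearMap.proj m : (Fin n → ℂ) →L[ℂ] ℂ).hasFDerivAt).const_sub (ζ θ)
        have hinv : HasFDerivAt (fun y : Fin n → ℂ => (ζ θ - y m)⁻¹)
            ((-((ζ θ - x m) ^ 2)⁻¹) •
              (-(ContinuousLinearMap.proj m : (Fin n → ℂ) →L[ℂ] ℂ))) x :=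
          (hasDerivAt_inv hne2).comp_hasFDerivAt x h0
        have hFc : HasFDerivAt (fun y : Fin n → ℂ => F (Function.update y m (ζ θ)))
            ((fderiv ℂ F (Function.update x m (ζ θ))).comp (updBase m)) x :=
          (hF _).hasFDerivAt.comp x (hasFDerivAt_updBase m (ζ θ) x)
        exact (hinv.mul hFc).const_mul (K θ)
      have hbound : ∀ (θ : ℝ), ∀ x ∈ ball a (1/2 : ℝ), ‖F' x θ‖ ≤ 2 * Cf + 4 * M' := by
        intro θ x hx
        have h1 : ‖(ζ θ - x m)⁻¹‖ ≤ 2 := by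
          rw [norm_inv]
          have := hζx θ x hx
          calc ‖ζ θ - x m‖⁻¹ ≤ ((1:ℝ)/2)⁻¹ := by
                apply inv_anti₀ (by norm_num) this
            _ = 2 := by norm_num
        have h2 : ‖(-((ζ θ - x m) ^ 2)⁻¹ : ℂ)‖ ≤ 4 := by
          rw [norm_neg, norm_inv, norm_pow]
          have := hζx θ x hx
          calc (‖ζ θ - x m‖ ^ 2)⁻¹ ≤ (((1:ℝ)/2) ^ 2)⁻¹ := by
                apply inv_anti₀ (by positivity) (by nlinarith)
            _ = 4 := by norm_num
        have h3 : ‖fderiv ℂ F (Function.update x m (ζ θ))‖ ≤ Cf := hCf _ (hmem θ x hx)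
        have h4 : ‖F (Function.update x m (ζ θ))‖ ≤ M' := hM' _ (hmem θ x hx)
        have hcomp : ‖(fderiv ℂ F (Function.update x m (ζ θ))).comp (updBase m)‖ ≤ Cf := by
          calc ‖(fderiv ℂ F (Function.update x m (ζ θ))).comp (updBase m)‖
              ≤ ‖fderiv ℂ F (Function.update x m (ζ θ))‖ * ‖updBase m‖ :=
                ContinuousLinearMap.opNorm_comp_le _ _
            _ ≤ Cf * 1 := mul_le_mul h3 (norm_updBase_le m) (norm_nonneg _) hCf0
            _ = Cf := mul_one Cf
        have hproj : ‖(-(ContinuousLinearMap.proj m : (Fin n → ℂ) →L[ℂ] ℂ))‖ ≤ 1 := by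
          rw [norm_neg]; exact norm_projCLM_le m
        exact norm_comb_le _ _ _ _ _ _ (hKnorm θ) h1 hcomp h4 h2 hproj hCf0 hM'0
      have hcont_upd : ∀ x : Fin n → ℂ, Continuous fun θ => Function.update x m (ζ θ) := by
        intro x
        have hd1 : Differentiable ℂ (fun w : ℂ => Function.update x m w) :=
          fun w => (hasFDerivAt_update x w).differentiableAt
        have hc1 : Continuous fun w : ℂ => Function.update x m w := hd1.continuous
        exact hc1.comp (continuous_circleMap c 1)
      have hKcont : Continuous K := by
        have hKeq : K = fun θ => (circleMap 0 1 θ * Complex.I) * (ζ θ - c)⁻¹ := by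
          funext θ; rw [hK]; simp only [deriv_circleMap]
        rw [hKeq]
        exact ((continuous_circleMap 0 1).mul continuous_const).mul
          (((continuous_circleMap c 1).sub continuous_const).inv₀
            fun θ => sub_ne_zero.2 (circleMap_ne_center one_ne_zero))
      have cont : ∀ x ∈ ball a (1/2 : ℝ), Continuous fun θ => Ψ x θ := by
        intro x hx
        exact hKcont.mul
          ((((continuous_circleMap c 1).sub continuous_const).inv₀
              fun θ => hζxne θ x hx).mul (hF.continuous.comp (hcont_upd x)))
      have ha : a ∈ ball a (1/2 : ℝ) := mem_ball_self (by norm_num)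
      have hmeas : MeasureTheory.AEStronglyMeasurable (F' a)
          (MeasureTheory.volume.restrict (Set.uIoc (0:ℝ) (2 * Real.pi))) := by
        letI : MeasurableSpace ((Fin n → ℂ) →L[ℂ] ℂ) := borel _
        haveI : BorelSpace ((Fin n → ℂ) →L[ℂ] ℂ) := ⟨rfl⟩
        haveI : SecondCountableTopology ((Fin n → ℂ) →L[ℂ] ℂ) := inferInstance
        have m1 : Measurable fun θ => Function.update a m (ζ θ) := (hcont_upd a).measurable
        have m2 : Measurable fun θ => fderiv ℂ F (Function.update a m (ζ θ)) :=
          (measurable_fderiv ℂ F).comp m1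
        have ccomp : Continuous fun L : (Fin n → ℂ) →L[ℂ] ℂ => L.comp (updBase m) := by
          have heq2 : (fun L : (Fin n → ℂ) →L[ℂ] ℂ => L.comp (updBase m))
              = fun L => ((ContinuousLinearMap.compL ℂ (Fin n → ℂ) (Fin n → ℂ) ℂ).flip
                  (updBase m)) L := by
            funext L
            rw [ContinuousLinearMap.flip_apply, ContinuousLinearMap.compL_apply]
          rw [heq2]
          exact ContinuousLinearMap.continuous _
        have m3 : Measurable fun θ =>
            (fderiv ℂ F (Function.update a m (ζ θ))).comp (updBase m) :=
          ccomp.measurable.comp m2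
        have minv : Measurable fun θ => (ζ θ - a m)⁻¹ :=
          (((continuous_circleMap c 1).sub continuous_const).inv₀
            fun θ => hζxne θ a ha).measurable
        have mF : Measurable fun θ => F (Function.update a m (ζ θ)) :=
          (hF.continuous.comp (hcont_upd a)).measurable
        have minv2 : Measurable fun θ => (-((ζ θ - a m) ^ 2)⁻¹ : ℂ) := by
          apply Measurable.neg
          apply Measurable.inv
          exact (((continuous_circleMap c 1).sub continuous_const).pow 2).measurable
        have : Measurable (F' a) := by
          apply Measurable.smul hKcont.measurable
          apply Measurable.add
          · exact minv.smul m3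
          · exact mF.smul (minv2.smul_const _)
        exact this.aestronglyMeasurable
      have main := intervalIntegral.hasFDerivAt_integral_of_dominated_of_fderiv_le
        (s := ball a (1/2 : ℝ)) (x₀ := a) (a := (0:ℝ)) (b := 2 * Real.pi)
        (F := Ψ) (F' := F') (bound := fun _ => 2 * Cf + 4 * M')
        (ball_mem_nhds a (by norm_num))
        (Filter.eventually_of_mem (ball_mem_nhds a (by norm_num))
          fun x hx => (cont x hx).aestronglyMeasurable)
        ((cont a ha).intervalIntegrable _ _)
        hmeas
        (MeasureTheory.ae_of_all _ fun θ _ x hx => hbound θ x hx)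
        intervalIntegrable_const
        (MeasureTheory.ae_of_all _ fun θ _ x hx => hΨdiff θ x hx)
      rw [hΦ]
      exact (main.differentiableAt).const_smul (2 * (Real.pi : ℂ) * Complex.I)⁻¹
    have hev : H =ᶠ[𝓝 a] Φ := by
      refine Filter.eventuallyEq_of_mem (ball_mem_nhds a one_pos) fun z hz => ?_
      refine claim1 z ?_
      have : dist (z m) (a m) ≤ dist z a := dist_le_pi_dist z a m
      rw [← ham]
      exact lt_of_le_of_lt this hz
    exact claim2.congr_of_eventuallyEq hev

lemma sin_pi_mul_eq_zero_iff (w : ℂ) :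
    Complex.sin ((Real.pi : ℂ) * w) = 0 ↔ ∃ k : ℤ, w = (k : ℂ) := by
  rw [Complex.sin_eq_zero_iff]
  have hπ : (Real.pi : ℂ) ≠ 0 := Complex.ofReal_ne_zero.2 Real.pi_ne_zero
  constructor
  · rintro ⟨k, hk⟩
    refine ⟨k, ?_⟩
    rw [mul_comm ((k:ℂ)) ((Real.pi : ℂ))] at hk
    exact mul_left_cancel₀ hπ hk
  · rintro ⟨k, hk⟩
    exact ⟨k, by rw [hk]; ring⟩

lemma sin_step {n : ℕ} {F : (Fin n → ℂ) → ℂ} (hF : Differentiable ℂ F) (m : Fin n)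
    (hv : ∀ z : Fin n → ℂ, (∃ k : ℤ, z m = (k : ℂ)) → F z = 0) :
    ∃ G : (Fin n → ℂ) → ℂ, Differentiable ℂ G ∧
      ∀ z, F z = Complex.sin ((Real.pi : ℂ) * z m) * G z := by
  classical
  have hevm : Differentiable ℂ (fun z : Fin n → ℂ => z m) :=
    fun z => (ContinuousLinearMap.proj m : (Fin n → ℂ) →L[ℂ] ℂ).differentiableAt
  have hsin : Differentiable ℂ fun w : ℂ => Complex.sin ((Real.pi : ℂ) * w) :=
    Complex.differentiable_sin.comp (differentiable_id.const_mul _)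
  have hsink : ∀ k : ℤ, Complex.sin ((Real.pi : ℂ) * (k : ℂ)) = 0 :=
    fun k => (sin_pi_mul_eq_zero_iff _).2 ⟨k, rfl⟩
  have hHs : ∀ k : ℤ, ∃ H : (Fin n → ℂ) → ℂ, Differentiable ℂ H ∧
      ∀ z, F z = (z m - (k : ℂ)) * H z :=
    fun k => div_linear hF m (k : ℂ) (fun z hz => hv z ⟨k, hz⟩)
  choose Hf hHdiff hHeq using hHs
  set S : ℤ → ℂ → ℂ := fun k => dslope (fun w => Complex.sin ((Real.pi : ℂ) * w)) (k : ℂ)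
    with hS
  have hSdiff : ∀ k : ℤ, Differentiable ℂ (S k) := fun k =>
    differentiableOn_univ.mp
      ((Complex.differentiableOn_dslope Filter.univ_mem).mpr hsin.differentiableOn)
  have hSk : ∀ k : ℤ, S k (k : ℂ) ≠ 0 := by
    intro k
    have h1 : HasDerivAt (fun w : ℂ => (Real.pi : ℂ) * w) ((Real.pi : ℂ)) ((k : ℂ)) := by
      simpa using (hasDerivAt_id ((k : ℂ))).const_mul ((Real.pi : ℂ))
    have hd : HasDerivAt (fun w => Complex.sin ((Real.pi : ℂ) * w))
        (Complex.cos ((Real.pi : ℂ) * (k : ℂ)) * (Real.pi : ℂ)) (k : ℂ) :=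
      (Complex.hasDerivAt_sin _).comp _ h1
    rw [hS]
    simp only
    rw [dslope_same, hd.deriv]
    apply mul_ne_zero
    · intro h0
      have h2 := Complex.sin_sq_add_cos_sq ((Real.pi : ℂ) * (k : ℂ))
      rw [hsink k, h0] at h2
      simp at h2
    · exact Complex.ofReal_ne_zero.2 Real.pi_ne_zero
  have hSne : ∀ (k : ℤ) (w : ℂ), w ≠ (k : ℂ) →
      S k w = (w - (k : ℂ))⁻¹ * Complex.sin ((Real.pi : ℂ) * w) := by
    intro k w hw
    rw [hS]
    simp only
    rw [dslope_of_ne _ hw, slope_def_field, hsink k, sub_zero, div_eq_inv_mul]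
  set G : (Fin n → ℂ) → ℂ := fun z =>
    if h : ∃ k : ℤ, z m = (k : ℂ) then Hf ⌊(z m).re⌋ z / S ⌊(z m).re⌋ (z m)
    else F z / Complex.sin ((Real.pi : ℂ) * z m) with hGdef
  have hGint : ∀ (z : Fin n → ℂ) (k : ℤ), z m = (k : ℂ) → G z = Hf k z / S k (z m) := by
    intro z k hzk
    have hfl : ⌊(z m).re⌋ = k := by rw [hzk]; simp
    rw [hGdef]
    simp only
    rw [dif_pos ⟨k, hzk⟩, hfl]
  have hGnot : ∀ z : Fin n → ℂ, ¬(∃ k : ℤ, z m = (k : ℂ)) →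
      G z = F z / Complex.sin ((Real.pi : ℂ) * z m) := by
    intro z hz
    rw [hGdef]
    simp only
    rw [dif_neg hz]
  have hid : ∀ z, F z = Complex.sin ((Real.pi : ℂ) * z m) * G z := by
    intro z
    by_cases h : ∃ k : ℤ, z m = (k : ℂ)
    · obtain ⟨k, hk⟩ := h
      have h1 : F z = 0 := hv z ⟨k, hk⟩
      have h2 : Complex.sin ((Real.pi : ℂ) * z m) = 0 := by rw [hk]; exact hsink k
      rw [h1, h2, zero_mul]
    · have hsne : Complex.sin ((Real.pi : ℂ) * z m) ≠ 0 :=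
        fun h0 => h ((sin_pi_mul_eq_zero_iff _).1 h0)
      rw [hGnot z h]
      field_simp
  refine ⟨G, ?_, hid⟩
  intro a
  by_cases h : ∃ k : ℤ, a m = (k : ℂ)
  · obtain ⟨k₀, hk₀⟩ := h
    have hevent : ∀ z ∈ ball a (1/2 : ℝ), G z = Hf k₀ z / S k₀ (z m) := by
      intro z hz
      have hzm : ‖z m - a m‖ < 1/2 := by
        have h1 : ‖z m - a m‖ ≤ ‖z - a‖ := by simpa using norm_le_pi_norm (z - a) m
        have h2 : ‖z - a‖ < 1/2 := by rwa [mem_ball, dist_eq_norm] at hz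
        linarith
      by_cases hzk : ∃ k : ℤ, z m = (k : ℂ)
      · obtain ⟨j, hj⟩ := hzk
        have hjk : j = k₀ := by
          by_contra hne
          have h1 : (1 : ℝ) ≤ |((j - k₀ : ℤ) : ℝ)| := by
            rw [← Int.cast_abs]
            exact_mod_cast Int.one_le_abs (sub_ne_zero.2 hne)
          have h2 : ((j - k₀ : ℤ) : ℂ) = z m - a m := by
            push_cast
            rw [hj, hk₀]
          have h3 : ‖((j - k₀ : ℤ) : ℂ)‖ < 1/2 := by rw [h2]; exact hzm
          have h4 : ‖((j - k₀ : ℤ) : ℂ)‖ = |((j - k₀ : ℤ) : ℝ)| := by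
            rw [show ((j - k₀ : ℤ) : ℂ) = (((j - k₀ : ℤ) : ℝ) : ℂ) by push_cast; ring]
            exact (Complex.norm_real _).trans (Real.norm_eq_abs _)
          rw [h4] at h3
          linarith
        exact hGint z k₀ (by rw [hj, hjk])
      · rw [hGnot z hzk]
        have hzm_ne : z m ≠ (k₀ : ℂ) := fun h0 => hzk ⟨k₀, h0⟩
        have hsne : Complex.sin ((Real.pi : ℂ) * z m) ≠ 0 :=
          fun h0 => hzk ((sin_pi_mul_eq_zero_iff _).1 h0)
        rw [hHeq k₀ z, hSne k₀ (z m) hzm_ne]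
        have hsub : z m - (k₀ : ℂ) ≠ 0 := sub_ne_zero.2 hzm_ne
        field_simp
    have hSc : DifferentiableAt ℂ (fun z : Fin n → ℂ => S k₀ (z m)) a :=
      DifferentiableAt.comp a (hSdiff k₀ (a m)) (hevm a)
    have hSne0 : S k₀ (a m) ≠ 0 := by rw [hk₀]; exact hSk k₀
    have hdiffat0 : DifferentiableAt ℂ (fun z => Hf k₀ z * (S k₀ (z m))⁻¹) a :=
      (hHdiff k₀ a).mul (hSc.inv hSne0)
    have hdiffat : DifferentiableAt ℂ (fun z => Hf k₀ z / S k₀ (z m)) a := by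
      simpa only [div_eq_mul_inv] using hdiffat0
    exact hdiffat.congr_of_eventuallyEq
      (Filter.eventuallyEq_of_mem (ball_mem_nhds a (by norm_num)) hevent)
  · have hsne : Complex.sin ((Real.pi : ℂ) * a m) ≠ 0 :=
      fun h0 => h ((sin_pi_mul_eq_zero_iff _).1 h0)
    have hopen : IsOpen {z : Fin n → ℂ | Complex.sin ((Real.pi : ℂ) * z m) ≠ 0} :=
      isOpen_ne.preimage (Complex.continuous_sin.comp (continuous_const.mul (continuous_apply m)))
    have hevent : ∀ z ∈ {z : Fin n → ℂ | Complex.sin ((Real.pi : ℂ) * z m) ≠ 0},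
        G z = F z / Complex.sin ((Real.pi : ℂ) * z m) :=
      fun z hz => hGnot z (fun hk => hz ((sin_pi_mul_eq_zero_iff _).2 hk))
    have hsinz : DifferentiableAt ℂ
        (fun z : Fin n → ℂ => Complex.sin ((Real.pi : ℂ) * z m)) a :=
      DifferentiableAt.comp (g := fun w : ℂ => Complex.sin ((Real.pi : ℂ) * w)) a (hsin (a m)) (hevm a)
    have hdiffat0 : DifferentiableAt ℂ
        (fun z => F z * (Complex.sin ((Real.pi : ℂ) * z m))⁻¹) a :=
      (hF a).mul (hsinz.inv hsne)
    have hdiffat : DifferentiableAt ℂ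
        (fun z => F z / Complex.sin ((Real.pi : ℂ) * z m)) a := by
      simpa only [div_eq_mul_inv] using hdiffat0
    exact hdiffat.congr_of_eventuallyEq
      (Filter.eventuallyEq_of_mem (hopen.mem_nhds hsne) hevent)

lemma prod_step {n : ℕ} (s : Finset (Fin n)) :
    ∀ F : (Fin n → ℂ) → ℂ, Differentiable ℂ F →
      (∀ z, (∃ m ∈ s, ∃ k : ℤ, z m = (k : ℂ)) → F z = 0) →
      ∃ G, Differentiable ℂ G ∧
        ∀ z, F z = G z * ∏ j ∈ s, Complex.sin ((Real.pi : ℂ) * z j) := by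
  classical
  induction s using Finset.induction_on with
  | empty =>
    intro F hF _
    exact ⟨F, hF, fun z => by simp⟩
  | @insert m s hm ih =>
    intro F hF hv
    obtain ⟨G₁, hG₁diff, hG₁⟩ := sin_step hF m
      (fun z hk => hv z ⟨m, Finset.mem_insert_self m s, hk⟩)
    have hv1 : ∀ z, (∃ j ∈ s, ∃ k : ℤ, z j = (k : ℂ)) → G₁ z = 0 := by
      rintro z ⟨j, hjs, k, hzj⟩
      have hjm : j ≠ m := fun h => hm (h ▸ hjs)
      by_cases hzm : ∃ K : ℤ, z m = (K : ℂ)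
      · obtain ⟨K, hK⟩ := hzm
        set seq : ℕ → (Fin n → ℂ) :=
          fun t => Function.update z m ((K : ℂ) + ((((t : ℝ) + 2)⁻¹ : ℝ) : ℂ)) with hseq
        have hseq0 : ∀ t : ℕ, G₁ (seq t) = 0 := by
          intro t
          have ht1 : (0 : ℝ) < ((t : ℝ) + 2)⁻¹ := by positivity
          have ht2 : ((t : ℝ) + 2)⁻¹ < 1 := by
            rw [inv_lt_one_iff₀]
            right
            have : (0:ℝ) ≤ (t:ℝ) := Nat.cast_nonneg t
            linarith
          have hFz : F (seq t) = 0 := by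
            refine hv _ ⟨j, Finset.mem_insert_of_mem hjs, k, ?_⟩
            rw [hseq]
            simp only
            rw [Function.update_of_ne hjm]
            exact hzj
          have hsne : Complex.sin ((Real.pi : ℂ) * (seq t) m) ≠ 0 := by
            intro h0
            rw [sin_pi_mul_eq_zero_iff] at h0
            obtain ⟨d, hd⟩ := h0
            have hm' : (seq t) m = (K : ℂ) + ((((t : ℝ) + 2)⁻¹ : ℝ) : ℂ) := by
              rw [hseq]; simp only; rw [Function.update_self]
            rw [hm'] at hd
            have hstep : ((((t : ℝ) + 2)⁻¹ : ℝ) : ℂ) = ((d : ℂ)) - ((K : ℂ)) := by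
              rw [← hd]; ring
            have hre : ((t : ℝ) + 2)⁻¹ = ((d : ℝ)) - ((K : ℝ)) := by
              have h5 := congrArg Complex.re hstep
              rw [Complex.ofReal_re, Complex.sub_re, Complex.intCast_re, Complex.intCast_re] at h5
              exact h5
            rcases le_or_gt (d - K) 0 with hle | hlt
            · have h6 : ((d : ℝ)) - ((K : ℝ)) ≤ 0 := by
                have : ((d - K : ℤ) : ℝ) ≤ 0 := by exact_mod_cast hle
                push_cast at this
                linarith
              linarith
            · have h6 : (1 : ℝ) ≤ ((d : ℝ)) - ((K : ℝ)) := by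
                have h7 : (1 : ℤ) ≤ d - K := hlt
                have : (1 : ℝ) ≤ ((d - K : ℤ) : ℝ) := by exact_mod_cast h7
                push_cast at this
                linarith
              linarith
          have := hG₁ (seq t)
          rw [hFz] at this
          exact ((mul_eq_zero.mp this.symm).resolve_left hsne)
        have hupdc : Continuous fun w : ℂ => Function.update z m w := by
          have hd1 : Differentiable ℂ (fun w : ℂ => Function.update z m w) :=
            fun w => (hasFDerivAt_update z w).differentiableAt
          exact hd1.continuous
        have hwlim : Filter.Tendsto (fun t : ℕ => (K : ℂ) + ((((t : ℝ) + 2)⁻¹ : ℝ) : ℂ))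
            Filter.atTop (𝓝 ((K : ℂ))) := by
          have h1 : Filter.Tendsto (fun t : ℕ => ((t : ℝ) + 2)⁻¹) Filter.atTop (𝓝 0) := by
            apply Filter.Tendsto.comp tendsto_inv_atTop_zero
            exact Filter.tendsto_atTop_add_const_right _ 2 tendsto_natCast_atTop_atTop
          have h2 : Filter.Tendsto (fun t : ℕ => ((((t : ℝ) + 2)⁻¹ : ℝ) : ℂ))
              Filter.atTop (𝓝 ((0 : ℝ) : ℂ)) :=
            (Complex.continuous_ofReal.tendsto 0).comp h1
          simpa using tendsto_const_nhds.add h2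
        have hseqlim : Filter.Tendsto seq Filter.atTop (𝓝 z) := by
          have h3 : Filter.Tendsto seq Filter.atTop (𝓝 (Function.update z m (K : ℂ))) :=
            (hupdc.tendsto _).comp hwlim
          rwa [← hK, Function.update_eq_self] at h3
        have hlim := (hG₁diff.continuous.tendsto z).comp hseqlim
        have heq0 : (G₁ ∘ seq) = fun _ => (0 : ℂ) := funext hseq0
        rw [heq0] at hlim
        exact (tendsto_nhds_unique tendsto_const_nhds hlim).symm
      · have hsne : Complex.sin ((Real.pi : ℂ) * z m) ≠ 0 :=
          fun h0 => hzm ((sin_pi_mul_eq_zero_iff _).1 h0)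
        have hFz : F z = 0 := hv z ⟨j, Finset.mem_insert_of_mem hjs, k, hzj⟩
        have := hG₁ z
        rw [hFz] at this
        exact ((mul_eq_zero.mp this.symm).resolve_left hsne)
    obtain ⟨G₂, hG₂diff, hG₂⟩ := ih G₁ hG₁diff hv1
    refine ⟨G₂, hG₂diff, fun z => ?_⟩
    rw [Finset.prod_insert hm, hG₁ z, hG₂ z]
    ring

/-- An entire function on ℂⁿ vanishing on H^n = ⋃ₘ {z : zₘ ∈ ℤ} is divisible by
∏ₖ sin(π zₖ). -/
theorem stmt2 {n : ℕ} (F : (Fin n → ℂ) → ℂ) (hF : Differentiable ℂ F)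
    (hvanish : ∀ z : Fin n → ℂ, (∃ m, ∃ k : ℤ, z m = (k : ℂ)) → F z = 0) :
    ∃ G : (Fin n → ℂ) → ℂ, Differentiable ℂ G ∧
      ∀ z, F z = G z * ∏ k, Complex.sin ((Real.pi : ℂ) * z k) := by
  obtain ⟨G, h1, h2⟩ := prod_step Finset.univ F hF
    (fun z h => by
      obtain ⟨m, _, k, hk⟩ := h
      exact hvanish z ⟨m, k, hk⟩)
  exact ⟨G, h1, h2⟩
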